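/- Let r ≥ 2 be an integer and let p ∈ ℝ[x_1, …, x_r] be a multi-linear polynomial (degree at most 1 in each variable). If x is sampled uniformly from the hypercube [0,1]^r, then Pr[ |p(x)| ≥ (2e²)^{-r} · 2^{-r} · max_{z ∈ [0,1]^r} |p(z)| ] ≥ 1/(e² · log r), where log denotes the natural logarithm. -/

import Mathlib

open MeasureTheory
open Set
open scoped ENNReal

lemma affine_abs_le (a b y : ℝ) (h0 : 0 ≤ y) (h1 : y ≤ 1) :
    |a + b * y| ≤ max |a| |a + b| := by
  have h : a + b * y = (1 - y) * a + y * (a + b) := by ring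
  rw [h]
  calc |(1 - y) * a + y * (a + b)| ≤ |(1 - y) * a| + |y * (a + b)| := abs_add_le _ _
    _ = (1 - y) * |a| + y * |a + b| := by
        rw [abs_mul, abs_mul, abs_of_nonneg (by linarith), abs_of_nonneg h0]
    _ ≤ (1 - y) * max |a| |a + b| + y * max |a| |a + b| := by
        gcongr
        · exact le_max_left _ _
        · exact le_max_right _ _
    _ = max |a| |a + b| := by ring

lemma onevar (a b c : ℝ) (hc : 0 < c) :
    ∫⁻ y in Icc (0:ℝ) 1,
      ENNReal.ofReal (Real.log (max (max |a| |a + b|) c) - Real.log (max |a + b * y| c))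
      ≤ ENNReal.ofReal (1 + Real.log 4) := by
  set W := max |a| |a + b| with hWdef
  have hW0 : 0 ≤ W := le_trans (abs_nonneg a) (le_max_left _ _)
  have hbnd : ∀ y : ℝ, 0 ≤ y → y ≤ 1 → |a + b * y| ≤ W := fun y h0 h1 => affine_abs_le a b y h0 h1
  have hRHS0 : (0:ℝ) ≤ 1 + Real.log 4 := by
    have : (0:ℝ) ≤ Real.log 4 := Real.log_nonneg (by norm_num)
    linarith
  by_cases hWc : W ≤ c
  · have hz : ∀ y : ℝ, ENNReal.ofReal (Real.log (max W c) - Real.log (max |a + b * y| c)) = 0 := by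
      intro y
      apply ENNReal.ofReal_eq_zero.2
      have h1 : max W c = c := max_eq_right hWc
      have h2 : Real.log c ≤ Real.log (max |a + b * y| c) :=
        Real.log_le_log hc (le_max_right _ _)
      rw [h1]; linarith
    simp only [hz, lintegral_zero]
    exact zero_le
  · push_neg at hWc
    have hmax : max W c = W := max_eq_left hWc.le
    have hWpos : 0 < W := lt_trans hc hWc
    simp only [hmax]
    by_cases hb : |b| ≤ W / 2
    · have hpt : ∀ y ∈ Icc (0:ℝ) 1,
          ENNReal.ofReal (Real.log W - Real.log (max |a + b * y| c))
            ≤ ENNReal.ofReal (Real.log 2) := by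
        intro y hy
        apply ENNReal.ofReal_le_ofReal
        have hlow : W / 2 ≤ |a + b * y| := by
          have l1 : |a| ≤ |a + b * y| + |b * y| := by
            calc |a| = |(a + b * y) + (-(b * y))| := by rw [show (a + b * y) + (-(b * y)) = a by ring]
              _ ≤ |a + b * y| + |(-(b * y))| := abs_add_le _ _
              _ = |a + b * y| + |b * y| := by rw [abs_neg]
          have l2 : |a + b| ≤ |a + b * y| + |b * (1 - y)| := by
            calc |a + b| = |(a + b * y) + (b * (1 - y))| := by
                  rw [show (a + b * y) + (b * (1 - y)) = a + b by ring]
              _ ≤ |a + b * y| + |b * (1 - y)| := abs_add_le _ _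
          have hby : |b * y| ≤ |b| := by
            rw [abs_mul, abs_of_nonneg hy.1]
            nlinarith [abs_nonneg b, hy.2]
          have hb1y : |b * (1 - y)| ≤ |b| := by
            rw [abs_mul, abs_of_nonneg (by linarith [hy.2] : (0:ℝ) ≤ 1 - y)]
            nlinarith [abs_nonneg b, hy.1]
          have : W - |b| ≤ |a + b * y| := by
            rcases max_cases |a| |a + b| with ⟨hW, _⟩ | ⟨hW, _⟩ <;> rw [← hWdef] at hW <;>
              [linarith; linarith]
          linarith
        have hpos : 0 < max |a + b * y| c := lt_max_of_lt_right hc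
        have hlog : Real.log (W / 2) ≤ Real.log (max |a + b * y| c) := by
          apply Real.log_le_log (by linarith)
          exact le_trans hlow (le_max_left _ _)
        rw [Real.log_div (ne_of_gt hWpos) (by norm_num)] at hlog
        linarith
      calc ∫⁻ y in Icc (0:ℝ) 1,
            ENNReal.ofReal (Real.log W - Real.log (max |a + b * y| c))
          ≤ ∫⁻ _ in Icc (0:ℝ) 1, ENNReal.ofReal (Real.log 2) :=
            setLIntegral_mono measurable_const hpt
        _ = ENNReal.ofReal (Real.log 2) * volume (Icc (0:ℝ) 1) := setLIntegral_const _ _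
        _ ≤ ENNReal.ofReal (1 + Real.log 4) := by
            rw [Real.volume_Icc, show (1:ℝ) - 0 = 1 by norm_num, ENNReal.ofReal_one, mul_one]
            apply ENNReal.ofReal_le_ofReal
            have : Real.log 2 ≤ Real.log 4 := Real.log_le_log (by norm_num) (by norm_num)
            linarith
    · push_neg at hb
      have hbpos : 0 < |b| := by linarith
      have hbne : b ≠ 0 := fun h => by rw [h] at hb; simp at hb; linarith
      set Z : ℝ → ℝ := fun y => Real.log W - Real.log (max |a + b * y| c) with hZdef
      have hZmeas : Measurable Z :=
        measurable_const.sub (Real.measurable_log.comp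
          (((measurable_id.const_mul b).const_add a).abs.max measurable_const))
      have hZnn : 0 ≤ᵐ[volume.restrict (Icc (0:ℝ) 1)] Z := by
        refine (ae_restrict_iff' measurableSet_Icc).2 (ae_of_all _ ?_)
        intro y hy
        have h1 : max |a + b * y| c ≤ W := max_le (hbnd y hy.1 hy.2) hWc.le
        have : Real.log (max |a + b * y| c) ≤ Real.log W :=
          Real.log_le_log (lt_max_of_lt_right hc) h1
        show (0:ℝ) ≤ Z y
        simp only [Z]; linarith
      rw [lintegral_eq_lintegral_meas_lt _ hZnn hZmeas.aemeasurable]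
      have hlevel : ∀ t ∈ Ioi (0:ℝ),
          (volume.restrict (Icc (0:ℝ) 1)) {y | t < Z y}
            ≤ min 1 (ENNReal.ofReal (4 * Real.exp (-t))) := by
        intro t _
        apply le_min
        · calc (volume.restrict (Icc (0:ℝ) 1)) {y | t < Z y}
              ≤ (volume.restrict (Icc (0:ℝ) 1)) univ := measure_mono (subset_univ _)
            _ = volume (Icc (0:ℝ) 1) := by rw [Measure.restrict_apply MeasurableSet.univ]; simp
            _ = 1 := by rw [Real.volume_Icc]; norm_num
        · have hsub : {y | t < Z y} ⊆ Metric.ball (-a / b) (W * Real.exp (-t) / |b|) := by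
            intro y hy
            simp only [Z, mem_setOf_eq] at hy
            have hmp : 0 < max |a + b * y| c := lt_max_of_lt_right hc
            have h1 : Real.log (max |a + b * y| c) < Real.log W - t := by linarith
            have h2 : max |a + b * y| c < Real.exp (Real.log W - t) :=
              (Real.log_lt_iff_lt_exp hmp).1 h1
            rw [Real.exp_sub, Real.exp_log hWpos] at h2
            have h3 : |a + b * y| < W * Real.exp (-t) := by
              rw [Real.exp_neg]
              calc |a + b * y| ≤ max |a + b * y| c := le_max_left _ _
                _ < W / Real.exp t := h2
                _ = W * (Real.exp t)⁻¹ := by ring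
            simp only [Metric.mem_ball, Real.dist_eq]
            have he : y - -a / b = (a + b * y) / b := by field_simp; ring
            rw [he, abs_div]
            gcongr
          calc (volume.restrict (Icc (0:ℝ) 1)) {y | t < Z y}
              ≤ volume {y | t < Z y} := Measure.restrict_le_self _
            _ ≤ volume (Metric.ball (-a / b) (W * Real.exp (-t) / |b|)) := measure_mono hsub
            _ = ENNReal.ofReal (2 * (W * Real.exp (-t) / |b|)) := Real.volume_ball _ _
            _ ≤ ENNReal.ofReal (4 * Real.exp (-t)) := by
                apply ENNReal.ofReal_le_ofReal
                have hexp : 0 < Real.exp (-t) := Real.exp_pos _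
                rw [mul_div_assoc']
                rw [div_le_iff₀ hbpos]
                nlinarith
      calc ∫⁻ t in Ioi (0:ℝ), (volume.restrict (Icc (0:ℝ) 1)) {y | t < Z y}
          ≤ ∫⁻ t in Ioi (0:ℝ), min 1 (ENNReal.ofReal (4 * Real.exp (-t))) :=
            setLIntegral_mono (by
              apply Measurable.min measurable_const
              exact ENNReal.measurable_ofReal.comp
                ((Real.measurable_exp.comp measurable_neg).const_mul 4)) hlevel
        _ ≤ ENNReal.ofReal (1 + Real.log 4) := by
            have hL : (0:ℝ) < Real.log 4 := Real.log_pos (by norm_num)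
            have hsplit : Ioi (0:ℝ) = Ioc (0:ℝ) (Real.log 4) ∪ Ioi (Real.log 4) :=
              (Ioc_union_Ioi_eq_Ioi hL.le).symm
            rw [hsplit, lintegral_union measurableSet_Ioi Ioc_disjoint_Ioi_same]
            have h1 : ∫⁻ t in Ioc (0:ℝ) (Real.log 4), min 1 (ENNReal.ofReal (4 * Real.exp (-t)))
                ≤ ENNReal.ofReal (Real.log 4) := by
              calc ∫⁻ t in Ioc (0:ℝ) (Real.log 4), min 1 (ENNReal.ofReal (4 * Real.exp (-t)))
                  ≤ ∫⁻ _ in Ioc (0:ℝ) (Real.log 4), 1 :=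
                    setLIntegral_mono measurable_const (fun t _ => min_le_left _ _)
                _ = volume (Ioc (0:ℝ) (Real.log 4)) := by rw [setLIntegral_const, one_mul]
                _ = ENNReal.ofReal (Real.log 4) := by rw [Real.volume_Ioc, sub_zero]
            have h2 : ∫⁻ t in Ioi (Real.log 4), min 1 (ENNReal.ofReal (4 * Real.exp (-t)))
                ≤ 1 := by
              have hint : IntegrableOn (fun t : ℝ => 4 * Real.exp (-t)) (Ioi (Real.log 4)) := by
                have := exp_neg_integrableOn_Ioi (Real.log 4) (zero_lt_one)
                simp only [neg_mul, one_mul] at this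
                exact this.const_mul 4
              calc ∫⁻ t in Ioi (Real.log 4), min 1 (ENNReal.ofReal (4 * Real.exp (-t)))
                  ≤ ∫⁻ t in Ioi (Real.log 4), ENNReal.ofReal (4 * Real.exp (-t)) :=
                    lintegral_mono (fun t => min_le_right _ _)
                _ = ENNReal.ofReal (∫ t in Ioi (Real.log 4), 4 * Real.exp (-t)) := by
                    rw [← ofReal_integral_eq_lintegral_ofReal hint]
                    exact ae_of_all _ (fun t => by positivity)
                _ = 1 := by
                    rw [integral_const_mul, integral_exp_neg_Ioi,
                      Real.exp_neg, Real.exp_log (by norm_num : (0:ℝ) < 4)]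
                    norm_num
            calc _ ≤ ENNReal.ofReal (Real.log 4) + 1 := add_le_add h1 h2
              _ = ENNReal.ofReal (1 + Real.log 4) := by
                  rw [← ENNReal.ofReal_one, ← ENNReal.ofReal_add hL.le (by norm_num)]
                  rw [add_comm]

lemma eval_cons_eq {n : ℕ} (P : MvPolynomial (Fin (n+1)) ℝ) (h0 : P.degreeOf 0 ≤ 1)
    (y : ℝ) (w : Fin n → ℝ) :
    MvPolynomial.eval (Fin.cons y w) P =
      MvPolynomial.eval w ((MvPolynomial.finSuccEquiv ℝ n P).coeff 0)
        + MvPolynomial.eval w ((MvPolynomial.finSuccEquiv ℝ n P).coeff 1) * y := by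
  rw [MvPolynomial.eval_eq_eval_mv_eval']
  have hdeg : (Polynomial.map (MvPolynomial.eval w) (MvPolynomial.finSuccEquiv ℝ n P)).natDegree < 2 := by
    have h1 : (Polynomial.map (MvPolynomial.eval w) (MvPolynomial.finSuccEquiv ℝ n P)).natDegree
        ≤ (MvPolynomial.finSuccEquiv ℝ n P).natDegree := Polynomial.natDegree_map_le
    have h2 := MvPolynomial.natDegree_finSuccEquiv P
    omega
  rw [Polynomial.eval_eq_sum_range' hdeg]
  simp [Finset.sum_range_succ, Polynomial.coeff_map]

lemma vertex_dominates : ∀ (n : ℕ) (P : MvPolynomial (Fin n) ℝ), (∀ i, P.degreeOf i ≤ 1) →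
    ∃ v : Fin n → ℝ, (∀ i, v i = 0 ∨ v i = 1) ∧
      ∀ x ∈ Set.univ.pi (fun _ : Fin n => Set.Icc (0:ℝ) 1),
        |MvPolynomial.eval x P| ≤ |MvPolynomial.eval v P| := by
  intro n
  induction n with
  | zero =>
      intro P _
      exact ⟨fun _ => 0, fun i => i.elim0, fun x _ => le_of_eq (by rw [Subsingleton.elim x (fun _ => 0)])⟩
  | succ n ih =>
      intro P hP
      set A := (MvPolynomial.finSuccEquiv ℝ n P).coeff 0 with hA
      set B := (MvPolynomial.finSuccEquiv ℝ n P).coeff 1 with hB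
      have hdA : ∀ i, A.degreeOf i ≤ 1 := fun i =>
        le_trans (MvPolynomial.degreeOf_coeff_finSuccEquiv P i 0) (hP i.succ)
      have hdB : ∀ i, B.degreeOf i ≤ 1 := fun i =>
        le_trans (MvPolynomial.degreeOf_coeff_finSuccEquiv P i 1) (hP i.succ)
      have hdAB : ∀ i, (A + B).degreeOf i ≤ 1 := fun i =>
        le_trans (MvPolynomial.degreeOf_add_le i A B) (max_le (hdA i) (hdB i))
      obtain ⟨v0, hv0, hd0⟩ := ih A hdA
      obtain ⟨v1, hv1, hd1⟩ := ih (A + B) hdAB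
      have hbound : ∀ x ∈ Set.univ.pi (fun _ : Fin (n+1) => Set.Icc (0:ℝ) 1),
          |MvPolynomial.eval x P| ≤ max |MvPolynomial.eval v0 A| |MvPolynomial.eval v1 (A + B)| := by
        intro x hx
        have hxw : Fin.tail x ∈ Set.univ.pi (fun _ : Fin n => Set.Icc (0:ℝ) 1) := by
          intro i _
          exact hx i.succ (mem_univ _)
        have hx0 := hx 0 (mem_univ _)
        have hxeq : x = Fin.cons (x 0) (Fin.tail x) := (Fin.cons_self_tail x).symm
        rw [hxeq, eval_cons_eq P (hP 0) (x 0) (Fin.tail x)]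
        calc |MvPolynomial.eval (Fin.tail x) A + MvPolynomial.eval (Fin.tail x) B * x 0|
            ≤ max |MvPolynomial.eval (Fin.tail x) A|
                |MvPolynomial.eval (Fin.tail x) A + MvPolynomial.eval (Fin.tail x) B| :=
              affine_abs_le _ _ _ hx0.1 hx0.2
          _ ≤ max |MvPolynomial.eval v0 A| |MvPolynomial.eval v1 (A + B)| := by
              apply max_le_max
              · exact hd0 _ hxw
              · rw [show MvPolynomial.eval (Fin.tail x) A + MvPolynomial.eval (Fin.tail x) B
                    = MvPolynomial.eval (Fin.tail x) (A + B) by rw [map_add]]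
                exact hd1 _ hxw
      rcases le_total |MvPolynomial.eval v0 A| |MvPolynomial.eval v1 (A + B)| with h | h
      · refine ⟨Fin.cons 1 v1, ?_, ?_⟩
        · intro i
          refine Fin.cases ?_ ?_ i
          · right; simp
          · intro j; simpa using hv1 j
        · intro x hx
          have : MvPolynomial.eval (Fin.cons (1:ℝ) v1) P = MvPolynomial.eval v1 (A + B) := by
            rw [eval_cons_eq P (hP 0), map_add]; ring
          rw [this]
          exact le_trans (hbound x hx) (max_le h (le_refl _))
      · refine ⟨Fin.cons 0 v0, ?_, ?_⟩
        · intro i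
          refine Fin.cases ?_ ?_ i
          · left; simp
          · intro j; simpa using hv0 j
        · intro x hx
          have : MvPolynomial.eval (Fin.cons (0:ℝ) v0) P = MvPolynomial.eval v0 A := by
            rw [eval_cons_eq P (hP 0)]; ring
          rw [this]
          exact le_trans (hbound x hx) (max_le (le_refl _) h)
lemma key_lintegral : ∀ (n : ℕ) (P : MvPolynomial (Fin n) ℝ), (∀ i, P.degreeOf i ≤ 1) →
    ∀ v : Fin n → ℝ, (∀ i, v i = 0 ∨ v i = 1) → ∀ c : ℝ, 0 < c →
    ∫⁻ x in Set.univ.pi (fun _ : Fin n => Set.Icc (0:ℝ) 1),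
      ENNReal.ofReal (Real.log (max |MvPolynomial.eval v P| c)
        - Real.log (max |MvPolynomial.eval x P| c))
      ≤ (n : ℝ≥0∞) * ENNReal.ofReal (1 + Real.log 4) := by
  intro n
  induction n with
  | zero =>
      intro P _ v _ c _
      have hz : ∀ x : Fin 0 → ℝ,
          ENNReal.ofReal (Real.log (max |MvPolynomial.eval v P| c)
            - Real.log (max |MvPolynomial.eval x P| c)) = 0 := by
        intro x
        rw [Subsingleton.elim x v, sub_self, ENNReal.ofReal_zero]
      simp only [hz, lintegral_zero, Nat.cast_zero, zero_mul, le_refl]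
  | succ n ih =>
      intro P hP v hv c hc
      set A := (MvPolynomial.finSuccEquiv ℝ n P).coeff 0 with hAdef
      set B := (MvPolynomial.finSuccEquiv ℝ n P).coeff 1 with hBdef
      have hdA : ∀ i, A.degreeOf i ≤ 1 := fun i =>
        le_trans (MvPolynomial.degreeOf_coeff_finSuccEquiv P i 0) (hP i.succ)
      have hdB : ∀ i, B.degreeOf i ≤ 1 := fun i =>
        le_trans (MvPolynomial.degreeOf_coeff_finSuccEquiv P i 1) (hP i.succ)
      have hdAB : ∀ i, (A + B).degreeOf i ≤ 1 := fun i =>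
        le_trans (MvPolynomial.degreeOf_add_le i A B) (max_le (hdA i) (hdB i))
      -- branch polynomial
      obtain ⟨P', hP', hev, hle⟩ : ∃ P' : MvPolynomial (Fin n) ℝ,
          (∀ i, P'.degreeOf i ≤ 1) ∧
          (MvPolynomial.eval v P = MvPolynomial.eval (Fin.tail v) P') ∧
          (∀ u : Fin n → ℝ, |MvPolynomial.eval u P'|
            ≤ max |MvPolynomial.eval u A| |MvPolynomial.eval u A + MvPolynomial.eval u B|) := by
        have hveq : MvPolynomial.eval v P
            = MvPolynomial.eval (Fin.tail v) A + MvPolynomial.eval (Fin.tail v) B * v 0 := by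
          conv_lhs => rw [← Fin.cons_self_tail v]
          exact eval_cons_eq P (hP 0) (v 0) (Fin.tail v)
        rcases hv 0 with h0 | h0
        · refine ⟨A, hdA, ?_, fun u => le_max_left _ _⟩
          rw [hveq, h0]; ring
        · refine ⟨A + B, hdAB, ?_, fun u => by rw [map_add]; exact le_max_right _ _⟩
          rw [hveq, h0, map_add]; ring
      have hvtail : ∀ i : Fin n, Fin.tail v i = 0 ∨ Fin.tail v i = 1 := fun i => hv i.succ
      -- measurability of the integrand
      have hFmeas : Measurable (fun x : Fin (n+1) → ℝ =>
          ENNReal.ofReal (Real.log (max |MvPolynomial.eval v P| c)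
            - Real.log (max |MvPolynomial.eval x P| c))) := by
        apply ENNReal.measurable_ofReal.comp
        apply measurable_const.sub
        exact Real.measurable_log.comp
          (((MvPolynomial.continuous_eval (p := P)).measurable).abs.max measurable_const)
      -- the equivalence
      set e := MeasurableEquiv.piFinSuccAbove (fun _ : Fin (n+1) => ℝ) 0 with hedef
      have hsymm : ∀ z : ℝ × (Fin n → ℝ), e.symm z = Fin.cons z.1 z.2 := by
        rintro ⟨y, w⟩
        simp [hedef, MeasurableEquiv.piFinSuccAbove, Fin.insertNthEquiv, Fin.insertNth_zero']
      have hmp : MeasurePreserving e.symm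
          ((volume : Measure ℝ).prod (volume : Measure (Fin n → ℝ))) volume := by
        have h1 := (MeasureTheory.volume_preserving_piFinSuccAbove (fun _ : Fin (n+1) => ℝ) 0).symm
        exact h1
      have hpre : e.symm ⁻¹' (Set.univ.pi (fun _ : Fin (n+1) => Set.Icc (0:ℝ) 1))
          = (Set.Icc (0:ℝ) 1) ×ˢ (Set.univ.pi (fun _ : Fin n => Set.Icc (0:ℝ) 1)) := by
        ext ⟨y, w⟩
        simp only [mem_preimage, hsymm, Set.mem_pi, mem_univ, forall_true_left, Set.mem_prod]
        constructor
        · intro h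
          refine ⟨by simpa using h 0, fun i => by simpa using h i.succ⟩
        · rintro ⟨h1, h2⟩ i
          refine Fin.cases ?_ ?_ i
          · simpa using h1
          · intro j; simpa using h2 j
      have hcomp : ∀ y : ℝ, ∀ w : Fin n → ℝ,
          MvPolynomial.eval (e.symm (y, w)) P
            = MvPolynomial.eval w A + MvPolynomial.eval w B * y := by
        intro y w
        rw [hsymm (y, w)]
        exact eval_cons_eq P (hP 0) y w
      -- transfer the integral
      have step1 : ∫⁻ x in Set.univ.pi (fun _ : Fin (n+1) => Set.Icc (0:ℝ) 1),
          ENNReal.ofReal (Real.log (max |MvPolynomial.eval v P| c)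
            - Real.log (max |MvPolynomial.eval x P| c))
          = ∫⁻ w in Set.univ.pi (fun _ : Fin n => Set.Icc (0:ℝ) 1),
              (∫⁻ y in Set.Icc (0:ℝ) 1,
                ENNReal.ofReal (Real.log (max |MvPolynomial.eval v P| c)
                  - Real.log (max |MvPolynomial.eval w A + MvPolynomial.eval w B * y| c))) := by
        have hg : Measurable (fun z : ℝ × (Fin n → ℝ) =>
            ENNReal.ofReal (Real.log (max |MvPolynomial.eval v P| c)
              - Real.log (max |MvPolynomial.eval (e.symm z) P| c))) :=
          hFmeas.comp e.symm.measurable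
        have e1 : ∫⁻ x in (Set.univ.pi fun _ : Fin (n+1) => Set.Icc (0:ℝ) 1),
            ENNReal.ofReal (Real.log (max |MvPolynomial.eval v P| c)
              - Real.log (max |MvPolynomial.eval x P| c))
            = ∫⁻ z in (Set.Icc (0:ℝ) 1) ×ˢ (Set.univ.pi fun _ : Fin n => Set.Icc (0:ℝ) 1),
                ENNReal.ofReal (Real.log (max |MvPolynomial.eval v P| c)
                  - Real.log (max |MvPolynomial.eval (e.symm z) P| c))
                ∂((volume : Measure ℝ).prod (volume : Measure (Fin n → ℝ))) := by
          rw [← hpre]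
          exact (hmp.setLIntegral_comp_preimage_emb e.symm.measurableEmbedding _ _).symm
        rw [e1, ← Measure.prod_restrict, lintegral_prod_symm _ hg.aemeasurable]
        apply lintegral_congr
        intro w
        apply lintegral_congr
        intro y
        rw [hcomp y w]
      rw [step1]
      -- inner bound
      have inner : ∀ w : Fin n → ℝ,
          (∫⁻ y in Set.Icc (0:ℝ) 1,
            ENNReal.ofReal (Real.log (max |MvPolynomial.eval v P| c)
              - Real.log (max |MvPolynomial.eval w A + MvPolynomial.eval w B * y| c)))
          ≤ ENNReal.ofReal (Real.log (max |MvPolynomial.eval (Fin.tail v) P'| c)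
              - Real.log (max |MvPolynomial.eval w P'| c))
            + ENNReal.ofReal (1 + Real.log 4) := by
        intro w
        set a := MvPolynomial.eval w A with hadef
        set b := MvPolynomial.eval w B with hbdef
        set G := max (max |a| |a + b|) c with hGdef
        have hGpos : 0 < G := lt_max_of_lt_right hc
        have hpt : ∀ y : ℝ,
            ENNReal.ofReal (Real.log (max |MvPolynomial.eval v P| c)
              - Real.log (max |a + b * y| c))
            ≤ ENNReal.ofReal (Real.log (max |MvPolynomial.eval (Fin.tail v) P'| c)
                - Real.log (max |MvPolynomial.eval w P'| c))
              + ENNReal.ofReal (Real.log G - Real.log (max |a + b * y| c)) := by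
          intro y
          have hsplit : Real.log (max |MvPolynomial.eval v P| c) - Real.log (max |a + b * y| c)
              = (Real.log (max |MvPolynomial.eval v P| c) - Real.log G)
                + (Real.log G - Real.log (max |a + b * y| c)) := by ring
          rw [hsplit]
          refine le_trans (ENNReal.ofReal_add_le) ?_
          apply add_le_add_left
          apply ENNReal.ofReal_le_ofReal
          have h1 : Real.log (max |MvPolynomial.eval v P| c)
              = Real.log (max |MvPolynomial.eval (Fin.tail v) P'| c) := by rw [hev]
          have h2 : Real.log (max |MvPolynomial.eval w P'| c) ≤ Real.log G := by
            apply Real.log_le_log (lt_max_of_lt_right hc)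
            exact max_le (le_trans (hle w) (le_max_left _ _)) (le_max_right _ _)
          rw [h1]
          linarith
        calc (∫⁻ y in Set.Icc (0:ℝ) 1,
              ENNReal.ofReal (Real.log (max |MvPolynomial.eval v P| c)
                - Real.log (max |a + b * y| c)))
            ≤ ∫⁻ y in Set.Icc (0:ℝ) 1,
              (ENNReal.ofReal (Real.log (max |MvPolynomial.eval (Fin.tail v) P'| c)
                - Real.log (max |MvPolynomial.eval w P'| c))
                + ENNReal.ofReal (Real.log G - Real.log (max |a + b * y| c))) :=
              lintegral_mono (fun y => hpt y)
          _ = ENNReal.ofReal (Real.log (max |MvPolynomial.eval (Fin.tail v) P'| c)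
                - Real.log (max |MvPolynomial.eval w P'| c))
                * volume (Set.Icc (0:ℝ) 1)
              + ∫⁻ y in Set.Icc (0:ℝ) 1,
                  ENNReal.ofReal (Real.log G - Real.log (max |a + b * y| c)) := by
              rw [lintegral_add_left measurable_const, setLIntegral_const]
          _ ≤ ENNReal.ofReal (Real.log (max |MvPolynomial.eval (Fin.tail v) P'| c)
                - Real.log (max |MvPolynomial.eval w P'| c))
              + ENNReal.ofReal (1 + Real.log 4) := by
              rw [Real.volume_Icc, show (1:ℝ) - 0 = 1 by norm_num, ENNReal.ofReal_one, mul_one]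
              exact add_le_add_right (onevar a b c hc) _
      -- outer integral
      have hcube1 : volume (Set.univ.pi (fun _ : Fin n => Set.Icc (0:ℝ) 1)) = 1 := by
        rw [volume_pi_pi]
        simp [Real.volume_Icc]
      calc ∫⁻ w in Set.univ.pi (fun _ : Fin n => Set.Icc (0:ℝ) 1),
            (∫⁻ y in Set.Icc (0:ℝ) 1,
              ENNReal.ofReal (Real.log (max |MvPolynomial.eval v P| c)
                - Real.log (max |MvPolynomial.eval w A + MvPolynomial.eval w B * y| c)))
          ≤ ∫⁻ w in Set.univ.pi (fun _ : Fin n => Set.Icc (0:ℝ) 1),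
              (ENNReal.ofReal (Real.log (max |MvPolynomial.eval (Fin.tail v) P'| c)
                - Real.log (max |MvPolynomial.eval w P'| c))
                + ENNReal.ofReal (1 + Real.log 4)) :=
            lintegral_mono (fun w => inner w)
        _ = (∫⁻ w in Set.univ.pi (fun _ : Fin n => Set.Icc (0:ℝ) 1),
              ENNReal.ofReal (Real.log (max |MvPolynomial.eval (Fin.tail v) P'| c)
                - Real.log (max |MvPolynomial.eval w P'| c)))
            + ENNReal.ofReal (1 + Real.log 4)
              * volume (Set.univ.pi (fun _ : Fin n => Set.Icc (0:ℝ) 1)) := by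
            rw [lintegral_add_right _ measurable_const, setLIntegral_const]
        _ ≤ (n : ℝ≥0∞) * ENNReal.ofReal (1 + Real.log 4) + ENNReal.ofReal (1 + Real.log 4) := by
            rw [hcube1, mul_one]
            exact add_le_add_left (ih P' hP' (Fin.tail v) hvtail c hc) _
        _ = ((n + 1 : ℕ) : ℝ≥0∞) * ENNReal.ofReal (1 + Real.log 4) := by
            push_cast
            ring
/-- **Anti-concentration of multi-linear polynomials** (Equation (1)): for a multi-linear
polynomial `p` in `r ≥ 2` variables and `x` uniform on `[0,1]^r`,
`|p(x)| ≥ (2e²)^{-r} 2^{-r} max_{[0,1]^r} |p|` with probability at least `1/(e² log r)`. -/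
theorem multilinear_anti_concentration
    (r : ℕ) (hr : 2 ≤ r) (P : MvPolynomial (Fin r) ℝ) (hP : ∀ i, P.degreeOf i ≤ 1) :
    ENNReal.ofReal (1 / (Real.exp 2 * Real.log r)) ≤
      volume {x ∈ Set.univ.pi fun _ : Fin r => Set.Icc (0 : ℝ) 1 |
        (2 * Real.exp 2)⁻¹ ^ r * (2 : ℝ)⁻¹ ^ r *
            sSup ((fun z => |MvPolynomial.eval z P|) ''
              Set.univ.pi fun _ : Fin r => Set.Icc (0 : ℝ) 1) ≤
          |MvPolynomial.eval x P|} := by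
  classical
  set C : Set (Fin r → ℝ) := Set.univ.pi fun _ : Fin r => Set.Icc (0:ℝ) 1 with hCdef
  set M : ℝ := sSup ((fun z => |MvPolynomial.eval z P|) '' C) with hMdef
  set ε : ℝ := (2 * Real.exp 2)⁻¹ ^ r * (2 : ℝ)⁻¹ ^ r with hεdef
  -- basic numeric facts
  have hexp2 : (7.38:ℝ) < Real.exp 2 := by
    have h1 : (2.7182818283:ℝ) < Real.exp 1 := Real.exp_one_gt_d9
    have h2 : Real.exp 2 = Real.exp 1 * Real.exp 1 := by
      rw [← Real.exp_add]; norm_num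
    nlinarith [Real.exp_pos 1]
  have hlog2 : (0.6931471803:ℝ) < Real.log 2 := Real.log_two_gt_d9
  have hlog4 : Real.log 4 = 2 * Real.log 2 := by
    rw [show (4:ℝ) = 2 ^ 2 by norm_num, Real.log_pow]
    push_cast; ring
  have hlogr : Real.log 2 ≤ Real.log r := by
    apply Real.log_le_log (by norm_num)
    exact_mod_cast hr
  have hlogrpos : 0 < Real.log r := lt_of_lt_of_le (by linarith) hlogr
  have hKr : 2 + Real.log 4 ≤ Real.exp 2 * Real.log r := by
    have h1 : Real.exp 2 * Real.log 2 ≤ Real.exp 2 * Real.log r := by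
      apply mul_le_mul_of_nonneg_left hlogr (le_of_lt (Real.exp_pos 2))
    nlinarith
  have hεpos : 0 < ε := by
    apply mul_pos <;> apply pow_pos <;> positivity
  have hεle1 : ε ≤ 1 := by
    have h1 : (2 * Real.exp 2)⁻¹ ≤ 1 := by
      rw [inv_le_one_iff₀]; right; nlinarith
    have h2 : ((2:ℝ))⁻¹ ≤ 1 := by norm_num
    calc ε ≤ 1 ^ r * 1 ^ r := by
          apply mul_le_mul (pow_le_pow_left₀ (by positivity) h1 r)
            (pow_le_pow_left₀ (by norm_num) h2 r) (by positivity) (by norm_num)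
      _ = 1 := by norm_num
  have hlogε : Real.log ε = -(r * (2 + Real.log 4)) := by
    rw [hεdef, Real.log_mul (by positivity) (by positivity), Real.log_pow, Real.log_pow,
      Real.log_inv, Real.log_inv, Real.log_mul (by norm_num) (Real.exp_ne_zero 2),
      Real.log_exp]
    push_cast
    nlinarith [hlog4]
  -- the maximizing vertex
  obtain ⟨v, hv, hdom⟩ := vertex_dominates r P hP
  have hvC : v ∈ C := by
    intro i _
    rcases hv i with h | h <;> rw [h] <;> constructor <;> norm_num
  have hMeq : M = |MvPolynomial.eval v P| := by
    apply IsGreatest.csSup_eq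
    constructor
    · exact ⟨v, hvC, rfl⟩
    · rintro _ ⟨x, hx, rfl⟩
      exact hdom x hx
  have hM0 : 0 ≤ M := hMeq ▸ abs_nonneg _
  have hCmeas : MeasurableSet C := MeasurableSet.univ_pi (fun _ => measurableSet_Icc)
  have hCvol : volume C = 1 := by
    rw [hCdef, volume_pi_pi]
    simp [Real.volume_Icc]
  rcases eq_or_lt_of_le hM0 with hM | hM
  · -- M = 0 : the set is all of C
    have hset : {x ∈ C | ε * M ≤ |MvPolynomial.eval x P|} = C := by
      ext x
      simp only [Set.mem_setOf_eq, ← hM, mul_zero, abs_nonneg, and_true]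
    rw [hset, hCvol]
    apply ENNReal.ofReal_le_one.2
    rw [div_le_one (by positivity)]
    nlinarith
  · -- main case
    set c : ℝ := ε * M with hcdef
    have hc : 0 < c := mul_pos hεpos hM
    have hcM : c ≤ M := by
      calc c = ε * M := rfl
        _ ≤ 1 * M := by apply mul_le_mul_of_nonneg_right hεle1 hM0
        _ = M := one_mul M
    set K : ℝ := r * (2 + Real.log 4) with hKdef
    have hKpos : 0 < K := by
      apply mul_pos
      · exact_mod_cast lt_of_lt_of_le (by norm_num) hr
      · nlinarith
    set Zf : (Fin r → ℝ) → ℝ≥0∞ := fun x =>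
      ENNReal.ofReal (Real.log (max |MvPolynomial.eval v P| c)
        - Real.log (max |MvPolynomial.eval x P| c)) with hZfdef
    have hZfmeas : Measurable Zf := by
      apply ENNReal.measurable_ofReal.comp
      apply measurable_const.sub
      exact Real.measurable_log.comp
        (((MvPolynomial.continuous_eval (p := P)).measurable).abs.max measurable_const)
    have hkey : ∫⁻ x in C, Zf x ≤ (r : ℝ≥0∞) * ENNReal.ofReal (1 + Real.log 4) :=
      key_lintegral r P hP v hv c hc
    -- bad points have Zf ≥ K
    have hbad : ∀ x ∈ C, ¬ (ε * M ≤ |MvPolynomial.eval x P|) → ENNReal.ofReal K ≤ Zf x := by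
      intro x _ hx
      push_neg at hx
      have h1 : max |MvPolynomial.eval x P| c = c := max_eq_right (le_of_lt hx)
      have h2 : max |MvPolynomial.eval v P| c = M := by
        rw [← hMeq]; exact max_eq_left hcM
      have h3 : Real.log M - Real.log c = K := by
        rw [hcdef, Real.log_mul (ne_of_gt hεpos) (ne_of_gt hM), hlogε]
        ring
      rw [hZfdef]
      simp only [h1, h2, h3]
      exact le_refl _
    -- Markov
    have hmarkov : ENNReal.ofReal K * (volume.restrict C) {x | ENNReal.ofReal K ≤ Zf x}
        ≤ ∫⁻ x in C, Zf x :=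
      mul_meas_ge_le_lintegral₀ hZfmeas.aemeasurable _
    set θ : ℝ := (1 + Real.log 4) / (2 + Real.log 4) with hθdef
    have hbadvol : (volume.restrict C) {x | ENNReal.ofReal K ≤ Zf x} ≤ ENNReal.ofReal θ := by
      have h1 : (volume.restrict C) {x | ENNReal.ofReal K ≤ Zf x}
          ≤ ((r : ℝ≥0∞) * ENNReal.ofReal (1 + Real.log 4)) / ENNReal.ofReal K := by
        rw [ENNReal.le_div_iff_mul_le (Or.inl (by simp [ENNReal.ofReal_eq_zero]; linarith))
          (Or.inl ENNReal.ofReal_ne_top)]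
        rw [mul_comm]
        exact le_trans hmarkov hkey
      refine le_trans h1 ?_
      have h2 : (r : ℝ≥0∞) * ENNReal.ofReal (1 + Real.log 4)
          = ENNReal.ofReal (r * (1 + Real.log 4)) := by
        rw [ENNReal.ofReal_mul (by positivity)]
        congr 1
        exact (ENNReal.ofReal_natCast r).symm
      rw [h2, ← ENNReal.ofReal_div_of_pos hKpos]
      apply ENNReal.ofReal_le_ofReal
      rw [hθdef, hKdef]
      have hrpos : (0:ℝ) < r := by exact_mod_cast lt_of_lt_of_le (by norm_num) hr
      rw [div_le_div_iff₀ (by positivity) (by nlinarith)]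
      ring_nf
      nlinarith [hrpos, hlog2]
    -- conclude
    set A : Set (Fin r → ℝ) := {x ∈ C | ε * M ≤ |MvPolynomial.eval x P|} with hAdef
    have hsub : C \ A ⊆ {x | ENNReal.ofReal K ≤ Zf x} ∩ C := by
      intro x hx
      rcases hx with ⟨hxC, hxA⟩
      have : ¬ (ε * M ≤ |MvPolynomial.eval x P|) := by
        intro h
        exact hxA ⟨hxC, h⟩
      exact ⟨hbad x hxC this, hxC⟩
    have hdiff : volume (C \ A) ≤ ENNReal.ofReal θ := by
      calc volume (C \ A) ≤ volume ({x | ENNReal.ofReal K ≤ Zf x} ∩ C) := measure_mono hsub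
        _ = (volume.restrict C) {x | ENNReal.ofReal K ≤ Zf x} :=
          (Measure.restrict_apply' hCmeas).symm
        _ ≤ ENNReal.ofReal θ := hbadvol
    have hunion : volume C ≤ volume A + volume (C \ A) := by
      calc volume C ≤ volume (A ∪ (C \ A)) := by
            apply measure_mono
            intro x hx
            by_cases h : x ∈ A
            · exact Or.inl h
            · exact Or.inr ⟨hx, h⟩
        _ ≤ volume A + volume (C \ A) := measure_union_le _ _
    have hfinal : ENNReal.ofReal (1 / (Real.exp 2 * Real.log r)) + ENNReal.ofReal θ ≤ 1 := by
      rw [← ENNReal.ofReal_add (by positivity)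
        (by rw [hθdef]; positivity)]
      rw [← ENNReal.ofReal_one]
      apply ENNReal.ofReal_le_ofReal
      have h1 : 1 / (Real.exp 2 * Real.log r) ≤ 1 / (2 + Real.log 4) := by
        apply one_div_le_one_div_of_le (by nlinarith) hKr
      have h2 : 1 / (2 + Real.log 4) + θ = 1 := by
        rw [hθdef]
        field_simp
        ring
      linarith
    calc ENNReal.ofReal (1 / (Real.exp 2 * Real.log r))
        ≤ 1 - ENNReal.ofReal θ := by
          apply ENNReal.le_sub_of_add_le_right ENNReal.ofReal_ne_top hfinal
      _ ≤ volume A := by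
          rw [← hCvol]
          apply tsub_le_iff_right.2
          exact le_trans hunion (add_le_add_right hdiff _)
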